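/- Let n, r, s, k be natural numbers with 2s < r. There exists an r-colouring of E(K_n) such that every k-connected subgraph using at most s colours has at most ⌈(1 − 1/C(r,s)) n⌉ vertices; that is, m(n,r,s,k) ≤ ⌈(1 − C(r,s)^{−1}) n⌉. -/

import Mathlib

/-- A graph `G` is `k`-connected if it has at least `k+1` vertices and removing any
set of at most `k-1` vertices leaves a connected graph. -/
def IsKConnected (k : ℕ) {V : Type*} (G : SimpleGraph V) : Prop :=
  k + 1 ≤ Nat.card V ∧
  ∀ S : Set V, Nat.card S ≤ k - 1 → (G.induce Sᶜ).Connected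

private lemma min'_eq_min' {α : Type*} [LinearOrder α] (s1 s2 : Finset α)
    (h1 : s1.Nonempty) (h2 : s2.Nonempty) (hs : s1 = s2) :
    s1.min' h1 = s2.min' h2 := by subst hs; rfl

theorem stmt_15 (n r s k : ℕ) (hn : 2 ≤ n) (hs : 1 ≤ s) (h : 2 * s < r) :
    ∃ f : Sym2 (Fin n) → Fin r,
      ∀ H : (⊤ : SimpleGraph (Fin n)).Subgraph,
        IsKConnected k H.coe →
        (∃ C : Finset (Fin r), C.card ≤ s ∧ ∀ e ∈ H.edgeSet, f e ∈ C) →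
        (Nat.card H.verts : ℤ) ≤ ⌈(1 - ((r.choose s : ℝ))⁻¹) * n⌉ := by
  classical
  have hsr : s ≤ r := by omega
  set t := r.choose s with ht_def
  have ht0 : 0 < t := Nat.choose_pos hsr
  have ht2 : 2 ≤ t := by
    obtain ⟨m, rfl⟩ : ∃ m, r = m + 1 := ⟨r - 1, by omega⟩
    obtain ⟨l, rfl⟩ : ∃ l, s = l + 1 := ⟨s - 1, by omega⟩
    have h1 : 0 < m.choose l := Nat.choose_pos (by omega)
    have h2 : 0 < m.choose (l + 1) := Nat.choose_pos (by omega)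
    have h3 : (m + 1).choose (l + 1) = m.choose l + m.choose (l + 1) :=
      Nat.choose_succ_succ m l
    omega
  -- `q` is `n / t`
  obtain ⟨q, hq1, hq2⟩ : ∃ q : ℕ, t * q ≤ n ∧ n < t * q + t :=
    ⟨n / t, Nat.mul_div_le n t, by
      have := Nat.div_add_mod n t
      have := Nat.mod_lt n ht0
      omega⟩
  -- the ceiling bound is at least `n - q`
  have hceil : ((n : ℤ) - (q : ℕ)) ≤ ⌈(1 - ((t : ℝ))⁻¹) * n⌉ := by
    rw [Int.le_ceil_iff]
    have htR : (0 : ℝ) < (t : ℝ) := by positivity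
    have hdiv : (n : ℝ) / t < (q : ℝ) + 1 := by
      rw [div_lt_iff₀ htR]
      have : (n : ℝ) < (t : ℝ) * q + t := by exact_mod_cast hq2
      nlinarith
    have heq : (1 - ((t : ℝ))⁻¹) * n = (n : ℝ) - (n : ℝ) / t := by
      field_simp
    rw [heq]
    push_cast
    linarith
  have hceil1 : (1 : ℤ) ≤ ⌈(1 - ((t : ℝ))⁻¹) * n⌉ := by
    rw [Int.one_le_ceil_iff]
    have h1t : (1 : ℝ) < (t : ℝ) := by exact_mod_cast (by omega : 1 < t)
    have hinv : ((t : ℝ))⁻¹ < 1 := by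
      rw [inv_lt_one_iff₀]; right; exact h1t
    have hnR : (0 : ℝ) < n := by exact_mod_cast (by omega : 0 < n)
    nlinarith
  -- equivalence between `Fin t` and `s`-subsets of `Fin r`
  have hcardP : ((Finset.univ : Finset (Fin r)).powersetCard s).card = t := by
    rw [Finset.card_powersetCard, Finset.card_univ, Fintype.card_fin]
  let e : ((Finset.univ : Finset (Fin r)).powersetCard s : Finset _) ≃ Fin t :=
    Finset.equivFinOfCardEq hcardP
  -- the colour class of a vertex
  let A : Fin n → Finset (Fin r) := fun v =>
    (e.symm ⟨(v : ℕ) % t, Nat.mod_lt _ ht0⟩ : Finset (Fin r))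
  have hAcard : ∀ v, (A v).card = s := by
    intro v
    have := (e.symm ⟨(v : ℕ) % t, Nat.mod_lt _ ht0⟩).2
    rw [Finset.mem_powersetCard] at this
    exact this.2
  have hne : ∀ u v : Fin n, ((A u ∪ A v)ᶜ : Finset (Fin r)).Nonempty := by
    intro u v
    rw [← Finset.card_pos, Finset.card_compl]
    have h1 : (A u ∪ A v).card ≤ 2 * s := by
      have := Finset.card_union_le (A u) (A v)
      rw [hAcard, hAcard] at this
      omega
    have h2 : Fintype.card (Fin r) = r := Fintype.card_fin r
    omega
  set pick : Fin n → Fin n → Fin r := fun u v => ((A u ∪ A v)ᶜ).min' (hne u v) with hpick_def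
  have hpick_comm : ∀ u v, pick u v = pick v u := by
    intro u v
    exact min'_eq_min' _ _ _ _ (by rw [Finset.union_comm])
  have hpick_mem : ∀ u v, pick u v ∈ ((A u ∪ A v)ᶜ : Finset (Fin r)) := fun u v =>
    Finset.min'_mem _ _
  refine ⟨Sym2.lift ⟨pick, hpick_comm⟩, ?_⟩
  rintro H hconn ⟨C, hCs, hCmem⟩
  obtain ⟨C', hCC', hC's⟩ := Finset.exists_superset_card_eq hCs
    (by rw [Fintype.card_fin]; exact hsr)
  set j : Fin t := e ⟨C', Finset.mem_powersetCard.mpr ⟨Finset.subset_univ _, hC's⟩⟩ with hj_def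
  have hAj : ∀ v : Fin n, (v : ℕ) % t = (j : ℕ) → A v = C' := by
    intro v hv
    have : (⟨(v : ℕ) % t, Nat.mod_lt _ ht0⟩ : Fin t) = j := Fin.ext hv
    simp only [A, this, hj_def, Equiv.symm_apply_apply]
  -- a vertex in class `j` has no incident edges of `H`
  have hnoadj : ∀ v : Fin n, v ∈ H.verts → (v : ℕ) % t = (j : ℕ) →
      ∀ u, ¬ H.Adj v u := by
    intro v _ hvj u hadj
    have hedge : s(v, u) ∈ H.edgeSet := hadj
    have hcol := hCmem _ hedge
    rw [Sym2.lift_mk] at hcol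
    have hmem := hpick_mem v u
    rw [Finset.mem_compl] at hmem
    exact hmem (Finset.mem_union_left _ ((hAj v hvj) ▸ hCC' hcol))
  by_cases hex : ∃ v ∈ H.verts, (v : ℕ) % t = (j : ℕ)
  · -- there is a vertex of `H` in class `j` : then `H` has at most one vertex
    obtain ⟨v, hv, hvj⟩ := hex
    have h1 : Nat.card H.verts ≤ 1 := by
      by_contra hgt
      push_neg at hgt
      rw [Nat.card_coe_set_eq] at hgt
      obtain ⟨u, hu, hune⟩ := Set.exists_ne_of_one_lt_ncard hgt v
      have hconn' := hconn.2 ∅ (by simp)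
      have hreach := hconn'.preconnected
        ⟨⟨v, hv⟩, by simp⟩ ⟨⟨u, hu⟩, by simp⟩
      obtain ⟨p⟩ := hreach
      have hnil : ¬ p.Nil := SimpleGraph.Walk.not_nil_of_ne (by
        intro hvu
        have h1 := congrArg Subtype.val hvu
        have h2 := congrArg Subtype.val h1
        exact hune h2.symm)
      have hadj := p.adj_snd hnil
      rw [SimpleGraph.comap_adj] at hadj
      rw [SimpleGraph.Subgraph.coe_adj] at hadj
      exact hnoadj v hv hvj _ hadj
    calc (Nat.card H.verts : ℤ) ≤ 1 := by exact_mod_cast h1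
      _ ≤ _ := hceil1
  · -- no vertex of `H` lies in class `j`
    push_neg at hex
    have hsub : H.verts.toFinset ⊆
        Finset.univ.filter (fun a : Fin n => ¬ ((a : ℕ) % t = (j : ℕ))) := by
      intro v hv
      rw [Set.mem_toFinset] at hv
      simp only [Finset.mem_filter, Finset.mem_univ, true_and]
      exact hex v hv
    have hjt : (j : ℕ) < t := j.2
    have hlt : ∀ m, m < q → (j : ℕ) + m * t < n := by
      intro m hm
      have h1 : (m + 1) * t ≤ q * t := Nat.mul_le_mul_right t (by omega)
      have h3 : (m + 1) * t = m * t + t := by ring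
      have h4 : q * t = t * q := by ring
      omega
    -- class `j` has at least `q` vertices
    have hclass : q ≤
        (Finset.univ.filter (fun v : Fin n => (v : ℕ) % t = (j : ℕ))).card := by
      have hF : ∀ m, m < q → ((j : ℕ) + m * t) % t = (j : ℕ) := by
        intro m _
        rw [Nat.add_mul_mod_self_right]
        exact Nat.mod_eq_of_lt hjt
      let g : ℕ → Fin n := fun m =>
        if hm : (j : ℕ) + m * t < n then ⟨(j : ℕ) + m * t, hm⟩ else ⟨0, by omega⟩
      have hmaps : ∀ m ∈ Finset.range q,
          g m ∈ Finset.univ.filter (fun v : Fin n => (v : ℕ) % t = (j : ℕ)) := by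
        intro m hm
        rw [Finset.mem_range] at hm
        simp only [Finset.mem_filter, Finset.mem_univ, true_and, g, dif_pos (hlt m hm)]
        exact hF m hm
      calc q = (Finset.range q).card := (Finset.card_range _).symm
        _ ≤ _ := Finset.card_le_card_of_injOn g hmaps (by
            intro a ha b hb hab
            rw [Finset.coe_range, Set.mem_Iio] at ha hb
            simp only [g, dif_pos (hlt a ha), dif_pos (hlt b hb)] at hab
            have h1 : (j : ℕ) + a * t = (j : ℕ) + b * t := congrArg Fin.val hab
            have h2 : a * t = b * t := by omega
            exact Nat.eq_of_mul_eq_mul_right ht0 h2)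
    have hcard2 : Nat.card H.verts ≤ n - q := by
      rw [Nat.card_coe_set_eq, Set.ncard_eq_toFinset_card']
      have h1 := Finset.card_le_card hsub
      have h2 := Finset.card_filter_add_card_filter_not
        (s := (Finset.univ : Finset (Fin n)))
        (p := fun v : Fin n => (v : ℕ) % t = (j : ℕ))
      rw [Finset.card_univ, Fintype.card_fin] at h2
      omega
    have h3 : (Nat.card H.verts : ℤ) ≤ ((n - q : ℕ) : ℤ) := by exact_mod_cast hcard2
    have hqn : q ≤ n := le_trans (Nat.le_mul_of_pos_left q ht0) hq1
    have h4 : ((n - q : ℕ) : ℤ) ≤ (n : ℤ) - (q : ℤ) := by omega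
    exact le_trans (le_trans h3 h4) hceil
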